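/- arXiv:1605.03533 — 3 statements merged into one kernel-verified Lean document; each statement's English description precedes it below -/
import Mathlib

section
/- The path P_n on n vertices has exactly ⌈n/2⌉ main eigenvalues. -/
open Matrix Finset Polynomial

variable {V : Type*} [Fintype V] [DecidableEq V]

/-- `μ` is an eigenvalue of the adjacency matrix of `G`. -/
def SimpleGraph.IsEigenvalue (G : SimpleGraph V) [DecidableRel G.Adj] (μ : ℝ) : Prop :=
  ∃ x : V → ℝ, x ≠ 0 ∧ (G.adjMatrix ℝ) *ᵥ x = μ • x

/-- `μ` is a main eigenvalue: some associated eigenvector is not orthogonal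
to the all-ones vector. -/
def SimpleGraph.IsMainEigenvalue (G : SimpleGraph V) [DecidableRel G.Adj] (μ : ℝ) : Prop :=
  ∃ x : V → ℝ, x ≠ 0 ∧ (G.adjMatrix ℝ) *ᵥ x = μ • x ∧ ∑ v, x v ≠ 0

/-- `μ` is a non-main eigenvalue: it is an eigenvalue whose eigenspace is
orthogonal to the all-ones vector. -/
def SimpleGraph.IsNonMainEigenvalue (G : SimpleGraph V) [DecidableRel G.Adj] (μ : ℝ) : Prop :=
  G.IsEigenvalue μ ∧ ¬ G.IsMainEigenvalue μ

/-- The multiplicity of `μ` as an eigenvalue of `G` (as a root of the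
characteristic polynomial of the adjacency matrix). -/
noncomputable def SimpleGraph.eigMult (G : SimpleGraph V) [DecidableRel G.Adj] (μ : ℝ) : ℕ :=
  ((G.adjMatrix ℝ).charpoly).rootMultiplicity μ

/-- `G` is harmonic: its degree vector is an eigenvector of the adjacency matrix
associated with a positive integer eigenvalue. -/
def SimpleGraph.IsHarmonic (G : SimpleGraph V) [DecidableRel G.Adj] : Prop :=
  ∃ ℓ : ℕ, 0 < ℓ ∧
    (G.adjMatrix ℝ) *ᵥ (fun v => (G.degree v : ℝ)) = (ℓ : ℝ) • (fun v => (G.degree v : ℝ))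


open Real

namespace PathAux

variable {n : ℕ}

noncomputable def ext (n : ℕ) (x : Fin n → ℝ) : ℕ → ℝ :=
  fun j => if h : 1 ≤ j ∧ j ≤ n then x ⟨j - 1, by omega⟩ else 0

lemma ext_succ (x : Fin n → ℝ) {j : ℕ} (h : j < n) : ext n x (j + 1) = x ⟨j, h⟩ := by
  simp [ext, Nat.succ_le_of_lt h]

lemma ext_zero (x : Fin n → ℝ) : ext n x 0 = 0 := by simp [ext]

lemma ext_gt (x : Fin n → ℝ) {j : ℕ} (h : n < j) : ext n x j = 0 := by
  rw [ext, dif_neg]; omega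

lemma mulVec_path [DecidableRel (SimpleGraph.pathGraph n).Adj]
    (x : Fin n → ℝ) (v : Fin n) :
    ((SimpleGraph.pathGraph n).adjMatrix ℝ *ᵥ x) v
      = ext n x v.val + ext n x (v.val + 2) := by
  classical
  have hv := v.isLt
  have hrw : ∀ w : Fin n,
      ((SimpleGraph.pathGraph n).adjMatrix ℝ) v w * x w
        = (fun j => (if (v.val + 1 = j) then ext n x (j+1) else 0)
            + (if (j + 1 = v.val) then ext n x (j+1) else 0)) w.val := by
    intro w
    simp only [SimpleGraph.adjMatrix_apply, SimpleGraph.pathGraph_adj]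
    have hx : x w = ext n x (w.val + 1) := (ext_succ x w.isLt).symm
    by_cases h1 : (v.val + 1 = w.val) <;> by_cases h2 : (w.val + 1 = v.val)
    · omega
    · simp [h1, h2, hx]
    · simp [h1, h2, hx]
    · simp [h1, h2]
  have hsum : ((SimpleGraph.pathGraph n).adjMatrix ℝ *ᵥ x) v
      = ∑ j ∈ range n, ((if (v.val + 1 = j) then ext n x (j+1) else 0)
          + (if (j + 1 = v.val) then ext n x (j+1) else 0)) := by
    have e0 : ((SimpleGraph.pathGraph n).adjMatrix ℝ *ᵥ x) v
        = ∑ w : Fin n, ((SimpleGraph.pathGraph n).adjMatrix ℝ) v w * x w := rfl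
    have e1 := Finset.sum_congr (rfl : (univ : Finset (Fin n)) = univ)
      (fun w _ => hrw w)
    rw [e0]
    exact e1.trans (Fin.sum_univ_eq_sum_range
      (fun j => (if (v.val + 1 = j) then ext n x (j+1) else 0)
        + (if (j + 1 = v.val) then ext n x (j+1) else 0)) n)
  rw [hsum, Finset.sum_add_distrib, add_comm (ext n x v.val)]
  congr 1
  · -- right neighbor sum
    have h1 : ∑ j ∈ range n, (if (v.val + 1 = j) then ext n x (j+1) else 0)
        = ∑ j ∈ range n, (if (j = v.val + 1) then ext n x (j+1) else 0) := by
      apply Finset.sum_congr rfl; intro j _; simp [eq_comm]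
    rw [h1, Finset.sum_ite_eq' (range n) (v.val + 1) (fun j => ext n x (j+1))]
    by_cases h : v.val + 1 ∈ range n
    · simp [h]
    · simp only [Finset.mem_range] at h
      rw [if_neg (by simpa using h), ext_gt x (by omega)]
  · -- left neighbor sum
    rcases Nat.eq_zero_or_pos v.val with h0 | h0
    · rw [h0, ext_zero]
      apply Finset.sum_eq_zero; intro j _; rw [if_neg (by omega)]
    · have h2 : ∑ j ∈ range n, (if (j + 1 = v.val) then ext n x (j+1) else 0)
          = ∑ j ∈ range n, (if (j = v.val - 1) then ext n x (j+1) else 0) := by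
        apply Finset.sum_congr rfl; intro j _
        congr 1; simp only [eq_iff_iff]; omega
      rw [h2, Finset.sum_ite_eq' (range n) (v.val - 1) (fun j => ext n x (j+1))]
      rw [if_pos (by simp only [Finset.mem_range]; omega)]
      congr 1; omega

open Real in
/-- the `k`-th eigenvector of the path graph -/
noncomputable def pv (n k : ℕ) : Fin n → ℝ :=
  fun v => Real.sin (((v : ℕ) + 1) * k * π / (n + 1))

lemma ext_pv {k j : ℕ} (hj : j ≤ n + 1) :
    ext n (pv n k) j = Real.sin (j * k * π / (n + 1)) := by
  rcases Nat.eq_zero_or_pos j with h0 | h1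
  · subst h0; simp [ext_zero]
  rcases Nat.lt_or_ge j (n + 1) with h2 | h2
  · obtain ⟨m, rfl⟩ : ∃ m, j = m + 1 := ⟨j - 1, by omega⟩
    rw [ext_succ _ (show m < n by omega), pv]
    norm_cast
  · have hj1 : j = n + 1 := by omega
    subst hj1
    rw [ext_gt _ (by omega)]
    have hne : ((n : ℝ) + 1) ≠ 0 := by positivity
    have : ((n : ℝ) + 1) * k * π / (n + 1) = k * π := by field_simp
    push_cast [this]
    exact (Real.sin_nat_mul_pi k).symm

lemma pv_eigen [DecidableRel (SimpleGraph.pathGraph n).Adj] {k : ℕ} (hk : k ≤ n) :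
    (SimpleGraph.pathGraph n).adjMatrix ℝ *ᵥ pv n k
      = (2 * Real.cos (k * π / (n + 1))) • pv n k := by
  funext v
  have hv := v.isLt
  rw [mulVec_path, ext_pv (by omega), ext_pv (by omega)]
  have hxv : pv n k v = Real.sin (((v : ℕ) + 1) * k * π / (n + 1)) := rfl
  rw [Pi.smul_apply, smul_eq_mul, hxv]
  set b : ℝ := (k : ℝ) * π / (n + 1) with hb
  have e0 : ((v : ℕ) : ℝ) * k * π / (n + 1) = (((v : ℕ) : ℝ) + 1) * b - b := by
    rw [hb]; ring
  have e2 : (((v : ℕ) : ℝ) + 2) * k * π / (n + 1) = (((v : ℕ) : ℝ) + 1) * b + b := by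
    rw [hb]; ring
  have e1 : (((v : ℕ) : ℝ) + 1) * k * π / (n + 1) = (((v : ℕ) : ℝ) + 1) * b := by
    rw [hb]; ring
  push_cast
  rw [e0, e2, e1, Real.sin_sub, Real.sin_add]
  ring

/-- any two eigenvectors for the same eigenvalue are proportional -/
lemma eigen_prop [DecidableRel (SimpleGraph.pathGraph n).Adj] {μ : ℝ}
    {x z : Fin n → ℝ} (hn : 2 ≤ n)
    (hx : (SimpleGraph.pathGraph n).adjMatrix ℝ *ᵥ x = μ • x)
    (hz : (SimpleGraph.pathGraph n).adjMatrix ℝ *ᵥ z = μ • z)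
    (v : Fin n) : z ⟨0, by omega⟩ * x v = x ⟨0, by omega⟩ * z v := by
  have hrec : ∀ y : Fin n → ℝ,
      (SimpleGraph.pathGraph n).adjMatrix ℝ *ᵥ y = μ • y →
      ∀ j, j < n → ext n y j + ext n y (j + 2) = μ * ext n y (j + 1) := by
    intro y hy j hj
    have := congrFun hy ⟨j, hj⟩
    rw [mulVec_path, Pi.smul_apply, smul_eq_mul] at this
    rw [this, ext_succ _ hj]
  have key : ∀ j, ext n z 1 * ext n x j = ext n x 1 * ext n z j := by
    intro j
    induction j using Nat.strong_induction_on with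
    | _ j ih =>
      match j with
      | 0 => rw [ext_zero, ext_zero]; ring
      | 1 => ring
      | (m + 2) =>
        by_cases hm : m + 2 ≤ n
        · have hx' := hrec x hx m (by omega)
          have hz' := hrec z hz m (by omega)
          have h1 := ih (m + 1) (by omega)
          have h2 := ih m (by omega)
          have ex2 : ext n x (m + 2) = μ * ext n x (m + 1) - ext n x m := by
            linarith
          have ez2 : ext n z (m + 2) = μ * ext n z (m + 1) - ext n z m := by
            linarith
          rw [ex2, ez2]
          linear_combination μ * h1 - h2
        · rw [ext_gt x (show n < m + 2 by omega),
            ext_gt z (show n < m + 2 by omega)]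
          ring
  have h0n : 0 < n := by omega
  have hv := v.isLt
  have := key (v.val + 1)
  rw [ext_succ x hv, ext_succ z hv] at this
  have e1x : ext n x 1 = x ⟨0, by omega⟩ := ext_succ x h0n
  have e1z : ext n z 1 = z ⟨0, by omega⟩ := ext_succ z h0n
  rw [e1x, e1z] at this
  simpa using this

lemma alpha_bounds {k : ℕ} (hk1 : 1 ≤ k) (hkn : k ≤ n) :
    0 < (k : ℝ) * π / (n + 1) ∧ (k : ℝ) * π / (n + 1) < π := by
  have hπ := Real.pi_pos
  have hk : (1 : ℝ) ≤ (k : ℝ) := by exact_mod_cast hk1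
  have hkn' : (k : ℝ) ≤ (n : ℝ) := by exact_mod_cast hkn
  have hn1 : (0 : ℝ) < (n : ℝ) + 1 := by positivity
  constructor
  · positivity
  · rw [div_lt_iff₀ hn1]
    nlinarith

lemma sum_pv_key (k : ℕ) :
    2 * Real.sin ((k * π / (n + 1)) / 2) * ∑ v : Fin n, pv n k v
      = (1 - (-1 : ℝ) ^ k) * Real.cos ((k * π / (n + 1)) / 2) := by
  set α : ℝ := k * π / (n + 1) with hα
  set g : ℕ → ℝ := fun j => Real.cos ((2 * (j : ℝ) + 1) * α / 2) with hg
  have hs : ∑ v : Fin n, pv n k v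
      = ∑ j ∈ range n, Real.sin (((j : ℝ) + 1) * k * π / (n + 1)) := by
    simp only [pv]
    exact Fin.sum_univ_eq_sum_range
      (fun j => Real.sin (((j : ℝ) + 1) * k * π / (n + 1))) n
  have key : ∀ j : ℕ, 2 * Real.sin (α / 2) * Real.sin (((j : ℝ) + 1) * k * π / (n + 1))
      = g j - g (j + 1) := by
    intro j
    have e1 : ((j : ℝ) + 1) * k * π / (n + 1) = ((j : ℝ) + 1) * α := by
      rw [hα]; ring
    rw [e1, hg]
    push_cast
    rw [show (2 * (j : ℝ) + 1) * α / 2 = ((j : ℝ) + 1) * α - α / 2 from by ring,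
      show (2 * ((j : ℝ) + 1) + 1) * α / 2 = ((j : ℝ) + 1) * α + α / 2 from by ring,
      Real.cos_sub, Real.cos_add]
    ring
  rw [hs, Finset.mul_sum]
  rw [Finset.sum_congr rfl (fun j _ => key j), Finset.sum_range_sub' g n]
  have hg0 : g 0 = Real.cos (α / 2) := by rw [hg]; norm_num
  have hgn : g n = (-1 : ℝ) ^ k * Real.cos (α / 2) := by
    have hn1 : ((n : ℝ) + 1) ≠ 0 := by positivity
    have e2 : (2 * (n : ℝ) + 1) * α / 2 = k * π - α / 2 := by
      rw [hα]; field_simp; ring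
    show Real.cos ((2 * (n : ℝ) + 1) * α / 2) = _
    rw [e2, Real.cos_nat_mul_pi_sub]
  rw [hg0, hgn]; ring

lemma sum_pv_even {k : ℕ} (hk1 : 1 ≤ k) (hkn : k ≤ n) (hke : Even k) :
    ∑ v : Fin n, pv n k v = 0 := by
  obtain ⟨h1, h2⟩ := alpha_bounds (n := n) hk1 hkn
  have hsin : 0 < Real.sin ((k * π / (n + 1)) / 2) :=
    Real.sin_pos_of_pos_of_lt_pi (by linarith) (by linarith [Real.pi_pos])
  have h := sum_pv_key (n := n) k
  have h0 : (1 - (-1 : ℝ) ^ k) = 0 := by rw [hke.neg_one_pow]; ring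
  rw [h0, zero_mul, mul_assoc] at h
  rcases mul_eq_zero.mp h with h1 | h1
  · linarith
  · rcases mul_eq_zero.mp h1 with h2 | h2
    · linarith
    · exact h2

lemma sum_pv_odd {k : ℕ} (hk1 : 1 ≤ k) (hkn : k ≤ n) (hko : Odd k) :
    ∑ v : Fin n, pv n k v ≠ 0 := by
  obtain ⟨h1, h2⟩ := alpha_bounds (n := n) hk1 hkn
  have hcos : 0 < Real.cos ((k * π / (n + 1)) / 2) :=
    Real.cos_pos_of_mem_Ioo ⟨by linarith [Real.pi_pos], by linarith⟩
  have hh := sum_pv_key (n := n) k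
  rw [hko.neg_one_pow] at hh
  intro h
  rw [h, mul_zero] at hh
  nlinarith

lemma pv_zero_pos {k : ℕ} (hk1 : 1 ≤ k) (hkn : k ≤ n) (h0 : 0 < n) :
    0 < pv n k ⟨0, h0⟩ := by
  obtain ⟨h1, h2⟩ := alpha_bounds (n := n) hk1 hkn
  have : pv n k ⟨0, h0⟩ = Real.sin (k * π / (n + 1)) := by
    rw [pv]; norm_num
  rw [this]
  exact Real.sin_pos_of_pos_of_lt_pi h1 h2

lemma pv_ne_zero {k : ℕ} (hk1 : 1 ≤ k) (hkn : k ≤ n) (h0 : 0 < n) :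
    pv n k ≠ 0 := by
  intro h
  have := pv_zero_pos (n := n) hk1 hkn h0
  rw [h] at this
  simp at this

lemma eig_loc [DecidableRel (SimpleGraph.pathGraph n).Adj] (hn : 2 ≤ n) {μ : ℝ}
    {x : Fin n → ℝ} (hx0 : x ≠ 0)
    (hx : (SimpleGraph.pathGraph n).adjMatrix ℝ *ᵥ x = μ • x) :
    ∃ k : ℕ, 1 ≤ k ∧ k ≤ n ∧ μ = 2 * Real.cos (k * π / (n + 1)) := by
  by_contra hcon
  push_neg at hcon
  have h0 : 0 < n := by omega
  set f : Module.End ℝ (Fin n → ℝ) :=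
    Matrix.mulVecLin ((SimpleGraph.pathGraph n).adjMatrix ℝ) with hf
  set ν : Fin (n + 1) → ℝ :=
    fun i => if i.val = 0 then μ else 2 * Real.cos (i.val * π / (n + 1)) with hν
  set w : Fin (n + 1) → (Fin n → ℝ) :=
    fun i => if i.val = 0 then x else pv n i.val with hw
  have harg : ∀ i : Fin (n + 1), i.val ≠ 0 →
      0 < (i.val : ℝ) * π / (n + 1) ∧ (i.val : ℝ) * π / (n + 1) < π := by
    intro i hi
    exact alpha_bounds (by omega) (by omega)
  have hinj : Function.Injective ν := by
    intro i j hij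
    rw [hν] at hij
    dsimp only at hij
    by_cases hi : i.val = 0 <;> by_cases hj : j.val = 0
    · exact Fin.ext (by omega)
    · rw [if_pos hi, if_neg hj] at hij
      exact absurd hij (hcon j.val (by omega) (by omega))
    · rw [if_neg hi, if_pos hj] at hij
      exact absurd hij.symm (hcon i.val (by omega) (by omega))
    · rw [if_neg hi, if_neg hj] at hij
      have hcc : Real.cos ((i.val : ℝ) * π / (n + 1))
          = Real.cos ((j.val : ℝ) * π / (n + 1)) := by linarith
      obtain ⟨hi1, hi2⟩ := harg i hi
      obtain ⟨hj1, hj2⟩ := harg j hj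
      have := Real.injOn_cos ⟨le_of_lt hi1, le_of_lt hi2⟩
        ⟨le_of_lt hj1, le_of_lt hj2⟩ hcc
      have hπ := Real.pi_pos
      have hn1 : (0 : ℝ) < (n : ℝ) + 1 := by positivity
      have hne : π / ((n : ℝ) + 1) ≠ 0 := by positivity
      rw [mul_div_assoc, mul_div_assoc] at this
      have : (i.val : ℝ) = (j.val : ℝ) := mul_right_cancel₀ hne this
      exact Fin.ext (by exact_mod_cast this)
  have heig : ∀ i, f.HasEigenvector (ν i) (w i) := by
    intro i
    constructor
    · rw [Module.End.mem_eigenspace_iff, hf, Matrix.mulVecLin_apply, hν, hw]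
      dsimp only
      by_cases hi : i.val = 0
      · simp only [if_pos hi]
        exact hx
      · simp only [if_neg hi]
        exact pv_eigen (by omega)
    · rw [hw]
      dsimp only
      by_cases hi : i.val = 0
      · simp only [if_pos hi]; exact hx0
      · simp only [if_neg hi]; exact pv_ne_zero (by omega) (by omega) h0
  have hli := Module.End.eigenvectors_linearIndependent' f ν hinj w heig
  have hcard := hli.fintype_card_le_finrank
  rw [Module.finrank_fintype_fun_eq_card] at hcard
  simp [Fintype.card_fin] at hcard

lemma main_iff [DecidableRel (SimpleGraph.pathGraph n).Adj] (hn : 2 ≤ n) (μ : ℝ) :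
    (SimpleGraph.pathGraph n).IsMainEigenvalue μ
      ↔ ∃ k : ℕ, 1 ≤ k ∧ k ≤ n ∧ Odd k ∧ μ = 2 * Real.cos (k * π / (n + 1)) := by
  have h0 : 0 < n := by omega
  constructor
  · rintro ⟨x, hx0, hxe, hxs⟩
    obtain ⟨k, hk1, hkn, rfl⟩ := eig_loc hn hx0 hxe
    refine ⟨k, hk1, hkn, ?_, rfl⟩
    rcases Nat.even_or_odd k with hke | hko
    · exfalso
      have hz := pv_eigen (n := n) (k := k) hkn
      have hprop : ∀ v, pv n k ⟨0, by omega⟩ * x v = x ⟨0, by omega⟩ * pv n k v :=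
        fun v => eigen_prop hn hxe hz v
      have hsum : pv n k ⟨0, by omega⟩ * ∑ v, x v
          = x ⟨0, by omega⟩ * ∑ v, pv n k v := by
        rw [Finset.mul_sum, Finset.mul_sum]
        exact Finset.sum_congr rfl (fun v _ => hprop v)
      rw [sum_pv_even hk1 hkn hke, mul_zero] at hsum
      rcases mul_eq_zero.mp hsum with h | h
      · have := pv_zero_pos (n := n) hk1 hkn h0
        linarith
      · exact hxs h
    · exact hko
  · rintro ⟨k, hk1, hkn, hko, rfl⟩
    exact ⟨pv n k, pv_ne_zero hk1 hkn h0, pv_eigen hkn, sum_pv_odd hk1 hkn hko⟩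

end PathAux

open PathAux Real in
theorem path_main_eigenvalue_count {n : ℕ} (hn : 2 ≤ n)
    [DecidableRel (SimpleGraph.pathGraph n).Adj] :
    {μ : ℝ | (SimpleGraph.pathGraph n).IsMainEigenvalue μ}.ncard = (n + 1) / 2 := by
  have key : {μ : ℝ | (SimpleGraph.pathGraph n).IsMainEigenvalue μ}
      = (fun j : ℕ => 2 * Real.cos ((2 * (j : ℝ) + 1) * π / (n + 1)))
        '' ↑(Finset.range ((n + 1) / 2)) := by
    ext μ
    rw [Set.mem_setOf_eq, main_iff hn μ]
    constructor
    · rintro ⟨k, hk1, hkn, hko, rfl⟩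
      obtain ⟨j, rfl⟩ := hko
      refine ⟨j, by simp; omega, ?_⟩
      push_cast
      ring_nf
    · rintro ⟨j, hj, rfl⟩
      simp only [Finset.coe_range, Set.mem_Iio] at hj
      refine ⟨2 * j + 1, by omega, by omega, ⟨j, rfl⟩, ?_⟩
      push_cast
      ring_nf
  rw [key, Set.ncard_image_of_injOn, Set.ncard_coe_finset, Finset.card_range]
  intro j1 hj1 j2 hj2 heq
  simp only [Finset.coe_range, Set.mem_Iio] at hj1 hj2
  have hb1 := alpha_bounds (n := n) (k := 2 * j1 + 1) (by omega) (by omega)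
  have hb2 := alpha_bounds (n := n) (k := 2 * j2 + 1) (by omega) (by omega)
  have hc1 : ((2 * j1 + 1 : ℕ) : ℝ) = 2 * (j1 : ℝ) + 1 := by push_cast; ring
  have hc2 : ((2 * j2 + 1 : ℕ) : ℝ) = 2 * (j2 : ℝ) + 1 := by push_cast; ring
  rw [hc1] at hb1
  rw [hc2] at hb2
  have hcc : Real.cos ((2 * (j1 : ℝ) + 1) * π / (n + 1))
      = Real.cos ((2 * (j2 : ℝ) + 1) * π / (n + 1)) := by linarith
  have := Real.injOn_cos ⟨le_of_lt hb1.1, le_of_lt hb1.2⟩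
    ⟨le_of_lt hb2.1, le_of_lt hb2.2⟩ hcc
  have hne : π / ((n : ℝ) + 1) ≠ 0 := by positivity
  rw [mul_div_assoc, mul_div_assoc] at this
  have := mul_right_cancel₀ hne this
  have : (j1 : ℝ) = (j2 : ℝ) := by linarith
  exact_mod_cast this
end

section
/- Let T = T(k,s) be a double star on n = k + s + 2 vertices. The least eigenvalue of T is non-main if and only if k = s (i.e., T is balanced). -/
open Matrix Finset Polynomial

variable {V : Type*} [Fintype V] [DecidableEq V]

/-- The double star `T(k,s)`: two adjacent centers, the first with `k` pendant
vertices and the second with `s` pendant vertices. -/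
def doubleStar (k s : ℕ) : SimpleGraph (Fin 2 ⊕ (Fin k ⊕ Fin s)) :=
  SimpleGraph.fromRel (fun a b =>
    match a, b with
    | Sum.inl _, Sum.inl _ => True
    | Sum.inl u, Sum.inr (Sum.inl _) => u = 0
    | Sum.inl u, Sum.inr (Sum.inr _) => u = 1
    | _, _ => False)

namespace DSAux

variable {k s : ℕ} [DecidableRel (doubleStar k s).Adj]

lemma mv_c0 (x : Fin 2 ⊕ (Fin k ⊕ Fin s) → ℝ) :
    ((doubleStar k s).adjMatrix ℝ *ᵥ x) (Sum.inl 0)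
      = (∑ i : Fin k, x (Sum.inr (Sum.inl i))) + x (Sum.inl 1) := by
  rw [mulVec, dotProduct]
  rw [Fintype.sum_sum_type, Fintype.sum_sum_type, Fin.sum_univ_two]
  simp only [SimpleGraph.adjMatrix_apply]
  simp [doubleStar]
  ring

lemma mv_c1 (x : Fin 2 ⊕ (Fin k ⊕ Fin s) → ℝ) :
    ((doubleStar k s).adjMatrix ℝ *ᵥ x) (Sum.inl 1)
      = (∑ j : Fin s, x (Sum.inr (Sum.inr j))) + x (Sum.inl 0) := by
  rw [mulVec, dotProduct]
  rw [Fintype.sum_sum_type, Fintype.sum_sum_type, Fin.sum_univ_two]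
  simp only [SimpleGraph.adjMatrix_apply]
  simp [doubleStar]
  ring

lemma mv_a (x : Fin 2 ⊕ (Fin k ⊕ Fin s) → ℝ) (i : Fin k) :
    ((doubleStar k s).adjMatrix ℝ *ᵥ x) (Sum.inr (Sum.inl i)) = x (Sum.inl 0) := by
  rw [mulVec, dotProduct]
  rw [Fintype.sum_sum_type, Fintype.sum_sum_type, Fin.sum_univ_two]
  simp only [SimpleGraph.adjMatrix_apply]
  simp [doubleStar]

lemma mv_b (x : Fin 2 ⊕ (Fin k ⊕ Fin s) → ℝ) (j : Fin s) :
    ((doubleStar k s).adjMatrix ℝ *ᵥ x) (Sum.inr (Sum.inr j)) = x (Sum.inl 1) := by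
  rw [mulVec, dotProduct]
  rw [Fintype.sum_sum_type, Fintype.sum_sum_type, Fin.sum_univ_two]
  simp only [SimpleGraph.adjMatrix_apply]
  simp [doubleStar]

/-- Structure of an eigenvector for a nonzero eigenvalue. -/
lemma eig_structure {μ : ℝ} (hμ : μ ≠ 0) {x : Fin 2 ⊕ (Fin k ⊕ Fin s) → ℝ}
    (hx : x ≠ 0) (h : (doubleStar k s).adjMatrix ℝ *ᵥ x = μ • x) :
    x (Sum.inl 0) ≠ 0 ∧ x (Sum.inl 1) ≠ 0 ∧
    μ^2 * x (Sum.inl 0) = k * x (Sum.inl 0) + μ * x (Sum.inl 1) ∧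
    μ^2 * x (Sum.inl 1) = s * x (Sum.inl 1) + μ * x (Sum.inl 0) ∧
    μ * (∑ v, x v) = k * x (Sum.inl 0) + μ * x (Sum.inl 0)
      + μ * x (Sum.inl 1) + s * x (Sum.inl 1) := by
  set p := x (Sum.inl 0) with hp
  set q := x (Sum.inl 1) with hq
  have ha : ∀ i : Fin k, p = μ * x (Sum.inr (Sum.inl i)) := by
    intro i
    have := congrFun h (Sum.inr (Sum.inl i))
    rwa [mv_a, Pi.smul_apply, smul_eq_mul] at this
  have hb : ∀ j : Fin s, q = μ * x (Sum.inr (Sum.inr j)) := by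
    intro j
    have := congrFun h (Sum.inr (Sum.inr j))
    rwa [mv_b, Pi.smul_apply, smul_eq_mul] at this
  have hc0 : (∑ i : Fin k, x (Sum.inr (Sum.inl i))) + q = μ * p := by
    have := congrFun h (Sum.inl 0)
    rwa [mv_c0, Pi.smul_apply, smul_eq_mul] at this
  have hc1 : (∑ j : Fin s, x (Sum.inr (Sum.inr j))) + p = μ * q := by
    have := congrFun h (Sum.inl 1)
    rwa [mv_c1, Pi.smul_apply, smul_eq_mul] at this
  have hSa : (k : ℝ) * p = μ * ∑ i : Fin k, x (Sum.inr (Sum.inl i)) := by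
    rw [Finset.mul_sum]
    calc (k : ℝ) * p = ∑ _i : Fin k, p := by
          simp [Finset.sum_const, nsmul_eq_mul]
      _ = _ := Finset.sum_congr rfl (fun i _ => ha i)
  have hSb : (s : ℝ) * q = μ * ∑ j : Fin s, x (Sum.inr (Sum.inr j)) := by
    rw [Finset.mul_sum]
    calc (s : ℝ) * q = ∑ _j : Fin s, q := by
          simp [Finset.sum_const, nsmul_eq_mul]
      _ = _ := Finset.sum_congr rfl (fun j _ => hb j)
  have e1 : μ^2 * p = k * p + μ * q := by
    have := congrArg (fun z => μ * z) hc0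
    simp only [mul_add] at this
    rw [← hSa] at this
    nlinarith [this]
  have e2 : μ^2 * q = s * q + μ * p := by
    have := congrArg (fun z => μ * z) hc1
    simp only [mul_add] at this
    rw [← hSb] at this
    nlinarith [this]
  have hzero : p = 0 → q = 0 → False := by
    intro hp0 hq0
    apply hx
    funext v
    rcases v with u | (i | j)
    · fin_cases u
      · exact hp0
      · exact hq0
    · have := ha i
      rw [hp0] at this
      have : x (Sum.inr (Sum.inl i)) = 0 := by
        rcases mul_eq_zero.mp this.symm with h' | h'
        · exact absurd h' hμ
        · exact h'
      simpa using this
    · have := hb j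
      rw [hq0] at this
      have : x (Sum.inr (Sum.inr j)) = 0 := by
        rcases mul_eq_zero.mp this.symm with h' | h'
        · exact absurd h' hμ
        · exact h'
      simpa using this
  have hp0 : p ≠ 0 := by
    intro hp0
    have hq0 : q = 0 := by
      rw [hp0] at e1
      have : μ * q = 0 := by linarith [e1]
      rcases mul_eq_zero.mp this with h' | h'
      · exact absurd h' hμ
      · exact h'
    exact hzero hp0 hq0
  have hq0 : q ≠ 0 := by
    intro hq0
    have hp0 : p = 0 := by
      rw [hq0] at e2
      have : μ * p = 0 := by linarith [e2]
      rcases mul_eq_zero.mp this with h' | h'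
      · exact absurd h' hμ
      · exact h'
    exact hzero hp0 hq0
  refine ⟨hp0, hq0, e1, e2, ?_⟩
  have hsum : (∑ v, x v)
      = p + q + (∑ i : Fin k, x (Sum.inr (Sum.inl i)))
        + (∑ j : Fin s, x (Sum.inr (Sum.inr j))) := by
    rw [Fintype.sum_sum_type, Fintype.sum_sum_type, Fin.sum_univ_two]
    ring
  rw [hsum]
  have := hSa
  have := hSb
  ring_nf
  nlinarith [hSa, hSb]

/-- Any nonzero eigenvalue satisfies the quartic equation. -/
lemma quartic {μ : ℝ} (hμ : μ ≠ 0) (h : (doubleStar k s).IsEigenvalue μ) :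
    μ^4 - (k + s + 1) * μ^2 + k * s = 0 := by
  obtain ⟨x, hx, hex⟩ := h
  obtain ⟨hp, hq, e1, e2, -⟩ := eig_structure hμ hx hex
  set p := x (Sum.inl 0)
  set q := x (Sum.inl 1)
  have h1 : (μ^2 - k) * p = μ * q := by linarith
  have h2 : (μ^2 - s) * q = μ * p := by linarith
  have h3 : (μ^4 - (k + s + 1) * μ^2 + k * s) * (p * q) = 0 := by
    have := congrArg₂ (· * ·) h1 h2
    linear_combination this
  rcases mul_eq_zero.mp h3 with h' | h'
  · exact h'
  · exact absurd h' (mul_ne_zero hp hq)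

noncomputable def tks (k s : ℕ) : ℝ :=
  (((k : ℝ) + s + 1) + Real.sqrt (((k : ℝ) + s + 1)^2 - 4 * k * s)) / 2

lemma disc_nonneg (k s : ℕ) : 0 ≤ ((k : ℝ) + s + 1)^2 - 4 * k * s := by
  nlinarith [sq_nonneg ((k : ℝ) - s), Nat.cast_nonneg (α := ℝ) k, Nat.cast_nonneg (α := ℝ) s]

lemma tks_root (k s : ℕ) : (tks k s)^2 - ((k : ℝ) + s + 1) * tks k s + k * s = 0 := by
  have hd : Real.sqrt (((k : ℝ) + s + 1)^2 - 4 * k * s) ^ 2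
      = ((k : ℝ) + s + 1)^2 - 4 * k * s := Real.sq_sqrt (disc_nonneg k s)
  unfold tks
  field_simp
  ring_nf; ring_nf at hd; nlinarith [hd]

lemma tks_pos (k s : ℕ) : 0 < tks k s := by
  have h1 : (0:ℝ) ≤ Real.sqrt (((k : ℝ) + s + 1)^2 - 4 * k * s) := Real.sqrt_nonneg _
  have h2 : (0:ℝ) ≤ (k : ℝ) := Nat.cast_nonneg k
  have h3 : (0:ℝ) ≤ (s : ℝ) := Nat.cast_nonneg s
  unfold tks
  nlinarith

noncomputable def mu0 (k s : ℕ) : ℝ := -Real.sqrt (tks k s)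

lemma mu0_neg (k s : ℕ) : mu0 k s < 0 := by
  have := Real.sqrt_pos.mpr (tks_pos k s)
  unfold mu0; linarith

lemma mu0_sq (k s : ℕ) : (mu0 k s)^2 = tks k s := by
  unfold mu0
  rw [neg_pow]
  simp [Real.sq_sqrt (tks_pos k s).le]

lemma mu0_quartic (k s : ℕ) :
    (mu0 k s)^4 - ((k : ℝ) + s + 1) * (mu0 k s)^2 + k * s = 0 := by
  have h1 := mu0_sq k s
  have h2 := tks_root k s
  have h4 : (mu0 k s)^4 = (tks k s)^2 := by rw [← h1]; ring
  rw [h4, h1]; exact h2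

lemma mu0_eig (hk : 1 ≤ k) : (doubleStar k s).IsEigenvalue (mu0 k s) := by
  set μ := mu0 k s with hμdef
  refine ⟨Sum.elim (fun u : Fin 2 => if u = 0 then μ^2 else (μ^2 - k) * μ)
      (Sum.elim (fun _ : Fin k => μ) (fun _ : Fin s => μ^2 - k)), ?_, ?_⟩
  · intro h0
    have := congrFun h0 (Sum.inr (Sum.inl ⟨0, hk⟩))
    simp at this
    exact absurd this (ne_of_lt (mu0_neg k s))
  · funext v
    rcases v with u | (i | j)
    · have h01 : u = 0 ∨ u = 1 := by omega
      rcases h01 with rfl | rfl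
      · rw [mv_c0]
        simp only [Sum.elim_inl, Sum.elim_inr, Pi.smul_apply, smul_eq_mul]
        simp only [Finset.sum_const, Finset.card_univ, Fintype.card_fin, nsmul_eq_mul]
        norm_num
        ring
      · rw [mv_c1]
        simp only [Sum.elim_inl, Sum.elim_inr, Pi.smul_apply, smul_eq_mul]
        simp only [Finset.sum_const, Finset.card_univ, Fintype.card_fin, nsmul_eq_mul]
        norm_num
        have hq := mu0_quartic k s
        linear_combination -hq
    · rw [mv_a]
      simp only [Sum.elim_inl, Sum.elim_inr, Pi.smul_apply, smul_eq_mul]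
      norm_num
      ring
    · rw [mv_b]
      simp only [Sum.elim_inl, Sum.elim_inr, Pi.smul_apply, smul_eq_mul]
      norm_num
      ring

lemma mu0_rel_balanced (k : ℕ) (hk : 1 ≤ k) :
    (mu0 k k)^2 + mu0 k k - k = 0 := by
  have ht := tks_root k k
  have htk : (k : ℝ) ≤ tks k k := by
    have h1 : (0:ℝ) ≤ Real.sqrt (((k : ℝ) + k + 1)^2 - 4 * k * k) := Real.sqrt_nonneg _
    unfold tks
    nlinarith
  have hsq : (tks k k - k)^2 = tks k k := by nlinarith [ht]
  have hs : Real.sqrt (tks k k) = tks k k - k := by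
    have h1 : Real.sqrt ((tks k k - k)^2) = tks k k - k :=
      Real.sqrt_sq (by linarith)
    rw [← h1]
    congr 1
    linarith [hsq]
  have := mu0_sq k k
  unfold mu0 at this ⊢
  rw [hs] at this ⊢
  linarith [this]

end DSAux

theorem doubleStar_min_nonmain_iff_balanced (k s : ℕ) (hk : 1 ≤ k) (hs : 1 ≤ s)
    [DecidableRel (doubleStar k s).Adj]
    (lamn : ℝ)
    (hmin : IsLeast {μ | (doubleStar k s).IsEigenvalue μ} lamn) :
    (doubleStar k s).IsNonMainEigenvalue lamn ↔ k = s := by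
  have hmu0eig := DSAux.mu0_eig (k := k) (s := s) hk
  have hlam_le : lamn ≤ DSAux.mu0 k s := hmin.2 hmu0eig
  have hlam_neg : lamn < 0 := lt_of_le_of_lt hlam_le (DSAux.mu0_neg k s)
  have hlam_ne : lamn ≠ 0 := ne_of_lt hlam_neg
  have hQ : lamn^4 - ((k : ℝ) + s + 1) * lamn^2 + k * s = 0 :=
    DSAux.quartic hlam_ne hmin.1
  constructor
  · rintro ⟨-, hnm⟩
    -- the eigenvector for lamn must sum to zero
    obtain ⟨x, hx, hex⟩ := hmin.1
    have hS : ∑ v, x v = 0 := by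
      by_contra hS
      exact hnm ⟨x, hx, hex, hS⟩
    obtain ⟨hp, hq, e1, e2, esum⟩ := DSAux.eig_structure hlam_ne hx hex
    set p := x (Sum.inl 0)
    set q := x (Sum.inl 1)
    rw [hS, mul_zero] at esum
    -- lamn * q = (lamn^2 - k) * p
    have hq' : lamn * q = (lamn^2 - k) * p := by linarith
    -- multiply esum by lamn and substitute
    have hstar : (lamn^3 + ((s : ℝ) + 1) * lamn^2 - s * k) * p = 0 := by
      have h0 : lamn * (0 : ℝ)
          = lamn * ((k : ℝ) * p + lamn * p + lamn * q + s * q) := by rw [← esum]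
      have : (0:ℝ) = k * lamn * p + lamn^2 * p + lamn * (lamn * q) + s * (lamn * q) := by
        rw [mul_zero] at h0; linear_combination h0
      rw [hq'] at this
      linear_combination -this
    have hstar' : lamn^3 + ((s : ℝ) + 1) * lamn^2 - s * k = 0 :=
      by rcases mul_eq_zero.mp hstar with h' | h'
         · exact h'
         · exact absurd h' hp
    -- deduce lamn^2 + lamn - k = 0
    have h5 : lamn^2 + lamn - (k : ℝ) = 0 := by
      have hts : lamn^2 ≠ 0 := pow_ne_zero 2 hlam_ne
      have : lamn^2 * (lamn^2 + lamn - k) = 0 := by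
        linear_combination hstar' + hQ
      rcases mul_eq_zero.mp this with h' | h'
      · exact absurd h' hts
      · exact h'
    -- conclude k = s
    have hfin : ((s : ℝ) - k) * lamn = 0 := by
      linear_combination hQ + (-lamn^2 + lamn + (s : ℝ)) * h5
    rcases mul_eq_zero.mp hfin with h' | h'
    · have : (k : ℝ) = s := by linarith
      exact_mod_cast this
    · exact absurd h' hlam_ne
  · intro hks
    subst hks
    refine ⟨hmin.1, ?_⟩
    rintro ⟨y, hy, hey, hysum⟩
    obtain ⟨hp, hq, e1, e2, esum⟩ := DSAux.eig_structure hlam_ne hy hey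
    set p := y (Sum.inl 0)
    set q := y (Sum.inl 1)
    -- (lamn^2 - k)^2 = lamn^2
    have hfac : (lamn^2 - k - lamn) * (lamn^2 - k + lamn) = 0 := by
      linear_combination hQ
    have hm0rel := DSAux.mu0_rel_balanced k hk
    rcases mul_eq_zero.mp hfac with hcase | hcase
    · -- lamn^2 - k = lamn : impossible by minimality
      exfalso
      have hfac2 : (lamn + DSAux.mu0 k k) * (lamn - DSAux.mu0 k k - 1) = 0 := by
        linear_combination hcase - hm0rel
      rcases mul_eq_zero.mp hfac2 with h' | h'
      · have := DSAux.mu0_neg k k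
        linarith
      · linarith
    · -- lamn^2 - k = -lamn : eigenvector sums to zero
      have hq' : lamn * q = (lamn^2 - k) * p := by linarith
      have hqp : q = -p := by
        have : lamn * q = lamn * (-p) := by
          rw [hq']
          have : lamn^2 - (k:ℝ) = -lamn := by linarith
          rw [this]; ring
        exact mul_left_cancel₀ hlam_ne this
      apply hysum
      have : lamn * (∑ v, y v) = 0 := by
        rw [esum, hqp]; ring
      rcases mul_eq_zero.mp this with h' | h'
      · exact absurd h' hlam_ne
      · exact h'
end

section
/- If T = T(k,s) is a non-balanced double star (k ≠ s, k,s ≥ 1), then T has exactly four main eigenvalues, namely the four nonzero roots of x⁴ − (k+s+1)x² + ks. -/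
open Matrix Finset Polynomial

variable {V : Type*} [Fintype V] [DecidableEq V]

namespace DoubleStarAux

variable {k s : ℕ}

lemma mv0 [DecidableRel (doubleStar k s).Adj] (x : Fin 2 ⊕ (Fin k ⊕ Fin s) → ℝ) :
    ((doubleStar k s).adjMatrix ℝ *ᵥ x) (Sum.inl 0) =
      x (Sum.inl 1) + ∑ i : Fin k, x (Sum.inr (Sum.inl i)) := by
  simp only [Matrix.mulVec, dotProduct, SimpleGraph.adjMatrix_apply]
  simp [Matrix.mulVec, dotProduct, SimpleGraph.adjMatrix_apply, Fintype.sum_sum_type,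
    doubleStar, SimpleGraph.fromRel_adj, Fin.sum_univ_two, ite_mul]

lemma mv1 [DecidableRel (doubleStar k s).Adj] (x : Fin 2 ⊕ (Fin k ⊕ Fin s) → ℝ) :
    ((doubleStar k s).adjMatrix ℝ *ᵥ x) (Sum.inl 1) =
      x (Sum.inl 0) + ∑ j : Fin s, x (Sum.inr (Sum.inr j)) := by
  simp only [Matrix.mulVec, dotProduct, SimpleGraph.adjMatrix_apply]
  simp [Matrix.mulVec, dotProduct, SimpleGraph.adjMatrix_apply, Fintype.sum_sum_type,
    doubleStar, SimpleGraph.fromRel_adj, Fin.sum_univ_two, ite_mul]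

lemma mvl0 [DecidableRel (doubleStar k s).Adj] (x : Fin 2 ⊕ (Fin k ⊕ Fin s) → ℝ) (i : Fin k) :
    ((doubleStar k s).adjMatrix ℝ *ᵥ x) (Sum.inr (Sum.inl i)) = x (Sum.inl 0) := by
  simp only [Matrix.mulVec, dotProduct, SimpleGraph.adjMatrix_apply]
  simp [Matrix.mulVec, dotProduct, SimpleGraph.adjMatrix_apply, Fintype.sum_sum_type,
    doubleStar, SimpleGraph.fromRel_adj, Fin.sum_univ_two, ite_mul]

lemma mvl1 [DecidableRel (doubleStar k s).Adj] (x : Fin 2 ⊕ (Fin k ⊕ Fin s) → ℝ) (j : Fin s) :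
    ((doubleStar k s).adjMatrix ℝ *ᵥ x) (Sum.inr (Sum.inr j)) = x (Sum.inl 1) := by
  simp only [Matrix.mulVec, dotProduct, SimpleGraph.adjMatrix_apply]
  simp [Matrix.mulVec, dotProduct, SimpleGraph.adjMatrix_apply, Fintype.sum_sum_type,
    doubleStar, SimpleGraph.fromRel_adj, Fin.sum_univ_two, ite_mul]

/-- Forward direction: a main eigenvalue is a nonzero root of the polynomial. -/
lemma main_imp_root [DecidableRel (doubleStar k s).Adj] (hk : 1 ≤ k) (hs : 1 ≤ s) {μ : ℝ}
    (h : (doubleStar k s).IsMainEigenvalue μ) :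
    μ ≠ 0 ∧ μ ^ 4 - ((k : ℝ) + s + 1) * μ ^ 2 + (k : ℝ) * s = 0 := by
  obtain ⟨x, -, hx, hsum⟩ := h
  set a := x (Sum.inl 0) with ha
  set b := x (Sum.inl 1) with hb
  set C := ∑ i : Fin k, x (Sum.inr (Sum.inl i)) with hC
  set D := ∑ j : Fin s, x (Sum.inr (Sum.inr j)) with hD
  have h1 : b + C = μ * a := by
    have := congrFun hx (Sum.inl 0)
    rwa [mv0, Pi.smul_apply, smul_eq_mul] at this
  have h2 : a + D = μ * b := by
    have := congrFun hx (Sum.inl 1)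
    rwa [mv1, Pi.smul_apply, smul_eq_mul] at this
  have h3 : (k : ℝ) * a = μ * C := by
    have heach : ∀ i : Fin k, a = μ * x (Sum.inr (Sum.inl i)) := by
      intro i
      have := congrFun hx (Sum.inr (Sum.inl i))
      rwa [mvl0, Pi.smul_apply, smul_eq_mul] at this
    calc (k : ℝ) * a = ∑ _i : Fin k, a := by simp [mul_comm]
      _ = ∑ i : Fin k, μ * x (Sum.inr (Sum.inl i)) := Finset.sum_congr rfl fun i _ => heach i
      _ = μ * C := by rw [hC, Finset.mul_sum]
  have h4 : (s : ℝ) * b = μ * D := by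
    have heach : ∀ j : Fin s, b = μ * x (Sum.inr (Sum.inr j)) := by
      intro j
      have := congrFun hx (Sum.inr (Sum.inr j))
      rwa [mvl1, Pi.smul_apply, smul_eq_mul] at this
    calc (s : ℝ) * b = ∑ _j : Fin s, b := by simp [mul_comm]
      _ = ∑ j : Fin s, μ * x (Sum.inr (Sum.inr j)) := Finset.sum_congr rfl fun j _ => heach j
      _ = μ * D := by rw [hD, Finset.mul_sum]
  have hsum' : a + b + C + D ≠ 0 := by
    intro h0
    apply hsum
    rw [Fintype.sum_sum_type, Fintype.sum_sum_type, Fin.sum_univ_two]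
    linarith [h0]
  have hpb : (μ^4 - ((k : ℝ) + s + 1)*μ^2 + (k : ℝ)*s) * b = 0 := by
    linear_combination (-(μ^2 - (k:ℝ))*μ) * h2 + (-(μ^2 - (k:ℝ))) * h4 + (-μ^2) * h1 + (-μ) * h3
  have hpa : (μ^4 - ((k : ℝ) + s + 1)*μ^2 + (k : ℝ)*s) * a = 0 := by
    linear_combination (-(μ^2 - (s:ℝ))*μ) * h1 + (-(μ^2 - (s:ℝ))) * h3 + (-μ^2) * h2 + (-μ) * h4
  have hp : μ ^ 4 - ((k : ℝ) + s + 1) * μ ^ 2 + (k : ℝ) * s = 0 := by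
    by_contra hp0
    have hb0 : b = 0 := by
      rcases mul_eq_zero.mp hpb with h | h
      · exact absurd h hp0
      · exact h
    have ha0 : a = 0 := by
      rcases mul_eq_zero.mp hpa with h | h
      · exact absurd h hp0
      · exact h
    have hC0 : C = 0 := by rw [ha0, hb0] at h1; simpa using h1
    have hD0 : D = 0 := by rw [ha0, hb0] at h2; simpa using h2
    exact hsum' (by linarith)
  refine ⟨?_, hp⟩
  intro hμ0
  rw [hμ0] at hp
  have hks : (1 : ℝ) ≤ (k : ℝ) * s := by
    have : (1 : ℝ) ≤ (k : ℝ) := by exact_mod_cast hk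
    have hs' : (1 : ℝ) ≤ (s : ℝ) := by exact_mod_cast hs
    nlinarith
  nlinarith [hp]

/-- Reverse direction: each nonzero root is a main eigenvalue. -/
lemma root_imp_main [DecidableRel (doubleStar k s).Adj] (hk : 1 ≤ k) (hs : 1 ≤ s)
    (hks : k ≠ s) {μ : ℝ} (hμ0 : μ ≠ 0)
    (hp : μ ^ 4 - ((k : ℝ) + s + 1) * μ ^ 2 + (k : ℝ) * s = 0) :
    (doubleStar k s).IsMainEigenvalue μ := by
  classical
  set x : Fin 2 ⊕ (Fin k ⊕ Fin s) → ℝ :=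
    Sum.elim (fun t => if t = 0 then μ^2 else μ * (μ^2 - k))
      (Sum.elim (fun _ => μ) (fun _ => μ^2 - (k : ℝ))) with hxdef
  have hx0 : x (Sum.inl 0) = μ^2 := by simp [hxdef]
  have hx1 : x (Sum.inl 1) = μ * (μ^2 - (k : ℝ)) := by simp [hxdef]
  have hxl0 : ∀ i : Fin k, x (Sum.inr (Sum.inl i)) = μ := fun i => by simp [hxdef]
  have hxl1 : ∀ j : Fin s, x (Sum.inr (Sum.inr j)) = μ^2 - (k : ℝ) := fun j => by simp [hxdef]
  refine ⟨x, ?_, ?_, ?_⟩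
  · intro hzero
    have : x (Sum.inl 0) = 0 := by rw [hzero]; rfl
    rw [hx0] at this
    exact hμ0 (by nlinarith [this])
  · funext v
    rcases v with t | (i | j)
    · fin_cases t
      · show ((doubleStar k s).adjMatrix ℝ *ᵥ x) (Sum.inl 0) = (μ • x) (Sum.inl 0)
        rw [mv0, Pi.smul_apply, smul_eq_mul, hx0, hx1]
        have : ∑ i : Fin k, x (Sum.inr (Sum.inl i)) = (k : ℝ) * μ := by
          simp [hxl0, mul_comm]
        rw [this]; ring
      · show ((doubleStar k s).adjMatrix ℝ *ᵥ x) (Sum.inl 1) = (μ • x) (Sum.inl 1)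
        rw [mv1, Pi.smul_apply, smul_eq_mul, hx0, hx1]
        have : ∑ j : Fin s, x (Sum.inr (Sum.inr j)) = (s : ℝ) * (μ^2 - (k : ℝ)) := by
          simp [hxl1, mul_comm]
          ring
        rw [this]
        linear_combination -hp
    · rw [mvl0, Pi.smul_apply, smul_eq_mul, hx0, hxl0 i]; ring
    · rw [mvl1, Pi.smul_apply, smul_eq_mul, hx1, hxl1 j]
  · intro hsum0
    have hq : μ^3 + (1 + (s : ℝ))*μ^2 - (k : ℝ)*s = 0 := by
      rw [Fintype.sum_sum_type, Fintype.sum_sum_type, Fin.sum_univ_two] at hsum0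
      have e1 : ∑ i : Fin k, x (Sum.inr (Sum.inl i)) = (k : ℝ) * μ := by simp [hxl0, mul_comm]
      have e2 : ∑ j : Fin s, x (Sum.inr (Sum.inr j)) = (s : ℝ) * (μ^2 - (k : ℝ)) := by
        simp [hxl1, mul_comm]
        ring
      rw [hx0, hx1, e1, e2] at hsum0
      linear_combination hsum0
    have key : (k : ℝ)^3 * (s : ℝ)^2 * ((k : ℝ) - s)^2 = 0 := by
      linear_combination
        (-(μ^2*(k:ℝ)^2*(s:ℝ)^2 + μ^2*(k:ℝ)^2*(s:ℝ) - μ^2*(k:ℝ)*(s:ℝ)^3 - μ^2*(k:ℝ)*(s:ℝ)^2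
          + μ*(k:ℝ)^3*(s:ℝ) + μ*(k:ℝ)^2*(s:ℝ)^3 + μ*(k:ℝ)^2*(s:ℝ)^2 + μ*(k:ℝ)^2*(s:ℝ)
          - μ*(k:ℝ)*(s:ℝ)^4 - 2*μ*(k:ℝ)*(s:ℝ)^3 - μ*(k:ℝ)*(s:ℝ)^2
          + 2*(k:ℝ)^3*(s:ℝ)^2 + (k:ℝ)^3*(s:ℝ) - 2*(k:ℝ)^2*(s:ℝ)^3 - (k:ℝ)^2*(s:ℝ)^2)) * hp
        + (-(-μ^3*(k:ℝ)^2*(s:ℝ)^2 - μ^3*(k:ℝ)^2*(s:ℝ) + μ^3*(k:ℝ)*(s:ℝ)^3 + μ^3*(k:ℝ)*(s:ℝ)^2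
          - μ^2*(k:ℝ)^3*(s:ℝ) + μ^2*(k:ℝ)^2*(s:ℝ)^2
          + μ*(k:ℝ)^3*(s:ℝ) + μ*(k:ℝ)^2*(s:ℝ)^3 + μ*(k:ℝ)^2*(s:ℝ)^2 + μ*(k:ℝ)^2*(s:ℝ)
          - μ*(k:ℝ)*(s:ℝ)^4 - 2*μ*(k:ℝ)*(s:ℝ)^3 - μ*(k:ℝ)*(s:ℝ)^2
          + (k:ℝ)^4*(s:ℝ) + (k:ℝ)^3*(s:ℝ) - (k:ℝ)^2*(s:ℝ)^3 - (k:ℝ)^2*(s:ℝ)^2)) * hq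
    have hkne : (k : ℝ) ≠ 0 := Nat.cast_ne_zero.mpr (by omega)
    have hsne : (s : ℝ) ≠ 0 := Nat.cast_ne_zero.mpr (by omega)
    have hksne : (k : ℝ) - s ≠ 0 := sub_ne_zero.mpr (Nat.cast_injective.ne hks)
    exact (mul_ne_zero (mul_ne_zero (pow_ne_zero 3 hkne) (pow_ne_zero 2 hsne))
      (pow_ne_zero 2 hksne)) key

end DoubleStarAux

theorem doubleStar_nonbalanced_four_main (k s : ℕ) (hk : 1 ≤ k) (hs : 1 ≤ s)
    (hks : k ≠ s) [DecidableRel (doubleStar k s).Adj] :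
    {μ : ℝ | (doubleStar k s).IsMainEigenvalue μ} =
        {x : ℝ | x ≠ 0 ∧ x ^ 4 - ((k : ℝ) + s + 1) * x ^ 2 + (k : ℝ) * s = 0} ∧
      {μ : ℝ | (doubleStar k s).IsMainEigenvalue μ}.ncard = 4 := by
  classical
  have hset : {μ : ℝ | (doubleStar k s).IsMainEigenvalue μ} =
      {x : ℝ | x ≠ 0 ∧ x ^ 4 - ((k : ℝ) + s + 1) * x ^ 2 + (k : ℝ) * s = 0} := by
    ext μ
    simp only [Set.mem_setOf_eq]
    constructor
    · exact fun h => DoubleStarAux.main_imp_root hk hs h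
    · exact fun ⟨h1, h2⟩ => DoubleStarAux.root_imp_main hk hs hks h1 h2
  refine ⟨hset, ?_⟩
  rw [hset]
  -- now count the roots
  have hk' : (1 : ℝ) ≤ (k : ℝ) := by exact_mod_cast hk
  have hs' : (1 : ℝ) ≤ (s : ℝ) := by exact_mod_cast hs
  set e : ℝ := (k : ℝ) + s + 1 with he
  have hepos : 0 < e := by rw [he]; linarith
  have hD2pos : 0 < e ^ 2 - 4 * ((k : ℝ) * s) := by
    rw [he]; nlinarith [sq_nonneg ((k : ℝ) - s)]
  set d : ℝ := Real.sqrt (e ^ 2 - 4 * ((k : ℝ) * s)) with hd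
  have hdpos : 0 < d := Real.sqrt_pos.mpr hD2pos
  have hdsq : d ^ 2 = e ^ 2 - 4 * ((k : ℝ) * s) := Real.sq_sqrt hD2pos.le
  have hde : d < e := by nlinarith [hdsq, hdpos, hepos, hk', hs']
  have hy2pos : 0 < (e - d) / 2 := by linarith
  have hy1pos : 0 < (e + d) / 2 := by linarith
  have hy21 : (e - d) / 2 < (e + d) / 2 := by linarith
  set r1 : ℝ := Real.sqrt ((e + d) / 2) with hr1def
  set r2 : ℝ := Real.sqrt ((e - d) / 2) with hr2def
  have hr1sq : r1 ^ 2 = (e + d) / 2 := Real.sq_sqrt hy1pos.le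
  have hr2sq : r2 ^ 2 = (e - d) / 2 := Real.sq_sqrt hy2pos.le
  have hr1pos : 0 < r1 := Real.sqrt_pos.mpr hy1pos
  have hr2pos : 0 < r2 := Real.sqrt_pos.mpr hy2pos
  have hr21 : r2 < r1 := by
    rw [hr1def, hr2def]
    exact Real.sqrt_lt_sqrt hy2pos.le hy21
  have hsetroots : {x : ℝ | x ≠ 0 ∧ x ^ 4 - ((k : ℝ) + s + 1) * x ^ 2 + (k : ℝ) * s = 0}
      = {r1, -r1, r2, -r2} := by
    ext x
    simp only [Set.mem_setOf_eq, Set.mem_insert_iff, Set.mem_singleton_iff]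
    constructor
    · rintro ⟨hx0, hpx⟩
      have h0 : (x ^ 2 - (e + d) / 2) * (x ^ 2 - (e - d) / 2) = 0 := by
        linear_combination hpx - (1/4) * hdsq - x^2 * he
      rcases mul_eq_zero.mp h0 with h | h
      · have : (x - r1) * (x + r1) = 0 := by linear_combination h - hr1sq
        rcases mul_eq_zero.mp this with h' | h'
        · exact Or.inl (by linarith)
        · exact Or.inr (Or.inl (by linarith))
      · have : (x - r2) * (x + r2) = 0 := by linear_combination h - hr2sq
        rcases mul_eq_zero.mp this with h' | h'
        · exact Or.inr (Or.inr (Or.inl (by linarith)))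
        · exact Or.inr (Or.inr (Or.inr (by linarith)))
    · have hv1 : r1 ^ 4 - ((k : ℝ) + s + 1) * r1 ^ 2 + (k : ℝ) * s = 0 := by
        rw [← he]
        linear_combination (r1 ^ 2 + (e + d) / 2 - e) * hr1sq + (1/4) * hdsq
      have hv2 : r2 ^ 4 - ((k : ℝ) + s + 1) * r2 ^ 2 + (k : ℝ) * s = 0 := by
        linear_combination (r2 ^ 2 + (e - d) / 2 - e) * hr2sq + (1/4) * hdsq + r2^2 * he
      rintro (rfl | rfl | rfl | rfl)
      · exact ⟨ne_of_gt hr1pos, hv1⟩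
      · exact ⟨ne_of_lt (by linarith), by linear_combination hv1⟩
      · exact ⟨ne_of_gt hr2pos, hv2⟩
      · exact ⟨ne_of_lt (by linarith), by linear_combination hv2⟩
  rw [hsetroots]
  have h1 : r1 ∉ ({-r1, r2, -r2} : Set ℝ) := by
    simp only [Set.mem_insert_iff, Set.mem_singleton_iff]
    push_neg
    refine ⟨by linarith, by linarith, by linarith⟩
  have h2 : -r1 ∉ ({r2, -r2} : Set ℝ) := by
    simp only [Set.mem_insert_iff, Set.mem_singleton_iff]
    push_neg
    refine ⟨by linarith, by linarith⟩
  have h3 : r2 ≠ -r2 := by linarith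
  rw [Set.ncard_insert_of_notMem h1, Set.ncard_insert_of_notMem h2, Set.ncard_pair h3]
end
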